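/- (Scalar comparison underlying Lemma 3.2: lower bound on the smallest eigenvalue of the ensemble covariance) Let b ≥ 0, d > 0, ε > 0, and let λ : [0, ∞) → [0, ∞) be differentiable with λ′(t) ≥ −2b λ(t) + 2d − λ(t)²/ε for all t ≥ 0. Then for all t ≥ 0, λ(t) ≥ min{ λ(0), −ε b + √(ε² b² + 2 ε d) }. In particular, if λ(0) ≥ −ε b + √(ε² b² + 2 ε d), then λ(t) ≥ −ε b + √(ε² b² + 2 ε d) > 0 for all t ≥ 0, a lower bound of order ε^{1/2} as ε → 0 for fixed b, d. -/
import Mathlib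


open scoped BigOperators
open Matrix MeasureTheory

noncomputable section

/-- Squared Euclidean norm of a vector in ℝ^n. -/
def sqNorm {n : ℕ} (v : Fin n → ℝ) : ℝ := ∑ k, (v k) ^ 2

/-- Euclidean norm of a vector in ℝ^n. -/
def evNorm {n : ℕ} (v : Fin n → ℝ) : ℝ := Real.sqrt (sqNorm v)

/-- Euclidean inner product on ℝ^n. -/
def eip {n : ℕ} (v w : Fin n → ℝ) : ℝ := ∑ k, v k * w k

/-- Empirical mean of an ensemble of M vectors in ℝ^n. -/
def empMean (M n : ℕ) (x : Fin M → Fin n → ℝ) : Fin n → ℝ := (M : ℝ)⁻¹ • ∑ i, x i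

/-- Empirical covariance matrix of an ensemble of M vectors in ℝ^n. -/
def empCov (M n : ℕ) (x : Fin M → Fin n → ℝ) : Matrix (Fin n) (Fin n) ℝ :=
  Matrix.of fun k l =>
    ((M : ℝ) - 1)⁻¹ * ∑ i, (x i k - empMean M n x k) * (x i l - empMean M n x l)

/-- Ensemble spread (l²-norm of ensemble deviations from the mean). -/
def spread (M n : ℕ) (x : Fin M → Fin n → ℝ) : ℝ :=
  ((M : ℝ) - 1)⁻¹ * ∑ i, sqNorm (x i - empMean M n x)

/-- Frobenius norm of a matrix. -/
def frobNorm {m n : ℕ} (A : Matrix (Fin m) (Fin n) ℝ) : ℝ :=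
  Real.sqrt (∑ i, ∑ j, (A i j) ^ 2)

/-- Scalar comparison underlying Lemma 3.2: lower bound on the smallest eigenvalue
of the ensemble covariance. -/
theorem eigenvalue_lower_comparison (b d ε : ℝ) (hb : 0 ≤ b) (hd : 0 < d) (hε : 0 < ε)
    (lam lam' : ℝ → ℝ)
    (hnonneg : ∀ t : ℝ, 0 ≤ t → 0 ≤ lam t)
    (hderiv : ∀ t : ℝ, 0 ≤ t → HasDerivAt lam (lam' t) t)
    (hineq : ∀ t : ℝ, 0 ≤ t →
      -(2 * b) * lam t + 2 * d - (lam t) ^ 2 / ε ≤ lam' t) :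
    (∀ t : ℝ, 0 ≤ t →
        min (lam 0) (-(ε * b) + Real.sqrt (ε ^ 2 * b ^ 2 + 2 * ε * d)) ≤ lam t) ∧
      (-(ε * b) + Real.sqrt (ε ^ 2 * b ^ 2 + 2 * ε * d) ≤ lam 0 →
        (∀ t : ℝ, 0 ≤ t →
            -(ε * b) + Real.sqrt (ε ^ 2 * b ^ 2 + 2 * ε * d) ≤ lam t) ∧
          0 < -(ε * b) + Real.sqrt (ε ^ 2 * b ^ 2 + 2 * ε * d)) := by
  set r : ℝ := -(ε * b) + Real.sqrt (ε ^ 2 * b ^ 2 + 2 * ε * d) with hr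
  have hrpos : 0 < r := by
    have h : ε * b < Real.sqrt (ε ^ 2 * b ^ 2 + 2 * ε * d) := by
      rw [Real.lt_sqrt (mul_nonneg hε.le hb)]
      nlinarith
    simp only [hr]; linarith
  have key : ∀ y : ℝ, 0 ≤ y → y < r → 0 < -(2 * b) * y + 2 * d - y ^ 2 / ε := by
    intro y hy hyr
    have h1 : y + ε * b < Real.sqrt (ε ^ 2 * b ^ 2 + 2 * ε * d) := by
      simp only [hr] at hyr; linarith
    have h2 : (y + ε * b) ^ 2 < ε ^ 2 * b ^ 2 + 2 * ε * d := by
      rw [Real.lt_sqrt (by positivity)] at h1; exact h1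
    have h3 : y ^ 2 < (2 * d - 2 * b * y) * ε := by nlinarith
    have h4 : y ^ 2 / ε < 2 * d - 2 * b * y := (div_lt_iff₀ hε).mpr h3
    linarith
  have hcont : ∀ x : ℝ, 0 ≤ x → ContinuousAt lam x := fun x hx =>
    (hderiv x hx).continuousAt
  have main : ∀ t : ℝ, 0 ≤ t → min (lam 0) r ≤ lam t := by
    intro t ht
    by_contra hlt
    push_neg at hlt
    set m : ℝ := min (lam 0) r with hm
    have hm0 : m ≤ lam 0 := min_le_left _ _
    have hmr : m ≤ r := min_le_right _ _
    have htpos : 0 < t := by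
      rcases ht.lt_or_eq with h | h
      · exact h
      · exfalso; rw [← h] at hlt; linarith
    set S : Set ℝ := {u | u ∈ Set.Icc (0 : ℝ) t ∧ m ≤ lam u} with hS
    have hS0 : (0 : ℝ) ∈ S := ⟨⟨le_refl 0, ht⟩, hm0⟩
    have hSne : S.Nonempty := ⟨0, hS0⟩
    have hSbdd : BddAbove S := ⟨t, fun u hu => hu.1.2⟩
    set s : ℝ := sSup S with hs
    have hs0 : 0 ≤ s := le_csSup hSbdd hS0
    have hst : s ≤ t := csSup_le hSne fun u hu => hu.1.2
    have hms : m ≤ lam s := by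
      have hlub : IsLUB S s := isLUB_csSup hSne hSbdd
      have hcl : s ∈ closure S := hlub.mem_closure hSne
      have hne : (nhdsWithin s S).NeBot := mem_closure_iff_nhdsWithin_neBot.mp hcl
      have htend : Filter.Tendsto lam (nhdsWithin s S) (nhds (lam s)) :=
        ((hcont s hs0).continuousWithinAt).tendsto
      exact ge_of_tendsto htend (eventually_nhdsWithin_of_forall fun u hu => hu.2)
    have hslt : s < t := by
      rcases hst.lt_or_eq with h | h
      · exact h
      · exfalso; rw [h] at hms; linarith
    have hmono : StrictMonoOn lam (Set.Icc s t) := by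
      apply strictMonoOn_of_deriv_pos (convex_Icc s t)
      · intro x hx
        exact (hcont x (hs0.trans hx.1)).continuousWithinAt
      · intro x hx
        rw [interior_Icc] at hx
        have hx0 : 0 ≤ x := hs0.trans hx.1.le
        have hxnotS : x ∉ S := fun hxS => absurd (le_csSup hSbdd hxS) (not_le.mpr hx.1)
        have hlamx : lam x < m := by
          by_contra h
          exact hxnotS ⟨⟨hx0, hx.2.le⟩, not_lt.mp h⟩
        have hpos : 0 < -(2 * b) * lam x + 2 * d - (lam x) ^ 2 / ε :=
          key (lam x) (hnonneg x hx0) (lt_of_lt_of_le hlamx hmr)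
        rw [(hderiv x hx0).deriv]
        exact lt_of_lt_of_le hpos (hineq x hx0)
    have := hmono ⟨le_refl s, hst⟩ ⟨hst, le_refl t⟩ hslt
    linarith
  refine ⟨main, fun h0 => ⟨fun t ht => ?_, hrpos⟩⟩
  have := main t ht
  rwa [min_eq_right h0] at this

end
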